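/- Let (K_j)_{j∈ℕ} be a nested decreasing sequence (K_j ⊇ K_{j+1}) of nonempty compact, symmetric, diagonal subsets of ℝ × ℝ. Then the intersection of the separately convex hulls equals the separately convex hull of the intersection: ⋂_{j∈ℕ} K_j^sc = (⋂_{j∈ℕ} K_j)^sc. -/
import Mathlib


open Set

/-- Separate convexity (with vectorial components) of a subset of a product space. -/
def SepConvex {α : Type*} [AddCommGroup α] [Module ℝ α] (E : Set (α × α)) : Prop :=
  ∀ p ∈ E, ∀ q ∈ E, ∀ t : ℝ, t ∈ Set.Icc (0:ℝ) 1 → (p.1 = q.1 ∨ p.2 = q.2) →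
    t • p + (1 - t) • q ∈ E

/-- The separately convex hull: smallest separately convex superset. -/
def sepConvexHull {α : Type*} [AddCommGroup α] [Module ℝ α] (E : Set (α × α)) : Set (α × α) :=
  ⋂₀ {F : Set (α × α) | E ⊆ F ∧ SepConvex F}

/-- Diagonalized and symmetrized version Ê of a set E. -/
def hatSet {α : Type*} (E : Set (α × α)) : Set (α × α) :=
  {p ∈ E | (p.1, p.1) ∈ E ∧ (p.2, p.1) ∈ E ∧ (p.2, p.2) ∈ E}

/-- `P` is a maximal Cartesian subset of `E`. -/
def IsMaxCart {α : Type*} (E P : Set (α × α)) : Prop :=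
  ∃ A : Set α, P = A ×ˢ A ∧ P ⊆ E ∧ ∀ B : Set α, A ⊆ B → B ×ˢ B ⊆ E → B = A

lemma subset_sepConvexHull' {α : Type*} [AddCommGroup α] [Module ℝ α] (E : Set (α × α)) :
    E ⊆ sepConvexHull E := fun _ hx => mem_sInter.2 fun _ hF => hF.1 hx

lemma sepConvex_sepConvexHull' {α : Type*} [AddCommGroup α] [Module ℝ α] (E : Set (α × α)) :
    SepConvex (sepConvexHull E) := fun p hp q hq t ht h =>
  mem_sInter.2 fun F hF => hF.2 p (mem_sInter.1 hp F hF) q (mem_sInter.1 hq F hF) t ht h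

lemma sepConvexHull_min' {α : Type*} [AddCommGroup α] [Module ℝ α] {E F : Set (α × α)}
    (h1 : E ⊆ F) (h2 : SepConvex F) : sepConvexHull E ⊆ F :=
  fun _ hx => mem_sInter.1 hx F ⟨h1, h2⟩

lemma sepConvexHull_mono' {α : Type*} [AddCommGroup α] [Module ℝ α] {E F : Set (α × α)}
    (h : E ⊆ F) : sepConvexHull E ⊆ sepConvexHull F :=
  sepConvexHull_min' (h.trans (subset_sepConvexHull' F)) (sepConvex_sepConvexHull' F)

lemma square_subset_hull {E : Set (ℝ × ℝ)} {a b : ℝ}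
    (h1 : (a, b) ∈ E) (h2 : (b, a) ∈ E) (h3 : (a, a) ∈ E) (h4 : (b, b) ∈ E) :
    uIcc a b ×ˢ uIcc a b ⊆ sepConvexHull E := by
  rintro ⟨x, y⟩ ⟨hx, hy⟩
  rw [← segment_eq_uIcc] at hx hy
  obtain ⟨t, s, ht, hs, hts, hxy⟩ := hx
  obtain ⟨u, v, hu, hv, huv, hyy⟩ := hy
  simp only [smul_eq_mul] at hxy hyy
  have hc := sepConvex_sepConvexHull' E
  have hsub := subset_sepConvexHull' E
  have hay : (a, y) ∈ sepConvexHull E := by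
    have h := hc (a, a) (hsub h3) (a, b) (hsub h1) u ⟨hu, by linarith⟩ (Or.inl rfl)
    have e : u • ((a, a) : ℝ × ℝ) + (1 - u) • (a, b) = (a, y) := by
      have hv' : (1 : ℝ) - u = v := by linarith
      rw [hv']
      simp only [Prod.smul_mk, Prod.mk_add_mk, smul_eq_mul, Prod.mk.injEq]
      exact ⟨by linear_combination a * huv, hyy⟩
    rwa [e] at h
  have hby : (b, y) ∈ sepConvexHull E := by
    have h := hc (b, a) (hsub h2) (b, b) (hsub h4) u ⟨hu, by linarith⟩ (Or.inl rfl)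
    have e : u • ((b, a) : ℝ × ℝ) + (1 - u) • (b, b) = (b, y) := by
      have hv' : (1 : ℝ) - u = v := by linarith
      rw [hv']
      simp only [Prod.smul_mk, Prod.mk_add_mk, smul_eq_mul, Prod.mk.injEq]
      exact ⟨by linear_combination b * huv, hyy⟩
    rwa [e] at h
  have h := hc (a, y) hay (b, y) hby t ⟨ht, by linarith⟩ (Or.inr rfl)
  have e : t • ((a, y) : ℝ × ℝ) + (1 - t) • (b, y) = (x, y) := by
    have hs' : (1 : ℝ) - t = s := by linarith
    rw [hs']
    simp only [Prod.smul_mk, Prod.mk_add_mk, smul_eq_mul, Prod.mk.injEq]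
    exact ⟨hxy, by linear_combination y * hts⟩
  rwa [e] at h

/-- Convex combination of two points in overlapping unordered intervals stays in the union. -/
lemma comb_mem_union {y₁ y₂ c t : ℝ} {I J : Set ℝ} {a₁ a₂ b₁ b₂ : ℝ}
    (hI : I = uIcc a₁ a₂) (hJ : J = uIcc b₁ b₂)
    (hy₁ : y₁ ∈ I) (hy₂ : y₂ ∈ J) (hc₁ : c ∈ I) (hc₂ : c ∈ J)
    (ht : t ∈ Icc (0:ℝ) 1) : t * y₁ + (1 - t) * y₂ ∈ I ∪ J := by
  have hz : t * y₁ + (1 - t) * y₂ ∈ uIcc y₁ y₂ := by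
    rw [← segment_eq_uIcc]
    exact ⟨t, 1 - t, ht.1, by linarith [ht.2], by ring, by simp [smul_eq_mul]⟩
  have hsplit := uIcc_subset_uIcc_union_uIcc (a := y₁) (b := c) (c := y₂) hz
  rcases hsplit with h | h
  · left
    rw [hI] at hy₁ hc₁ ⊢
    exact uIcc_subset_uIcc hy₁ hc₁ h
  · right
    rw [hJ] at hy₂ hc₂ ⊢
    exact uIcc_subset_uIcc hc₂ hy₂ h

lemma hull_subset_union {K : Set (ℝ × ℝ)}
    (hsym : ∀ p ∈ K, (p.2, p.1) ∈ K)
    (hdiag : ∀ p ∈ K, (p.1, p.1) ∈ K ∧ (p.2, p.2) ∈ K) :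
    sepConvexHull K ⊆ ⋃ p ∈ K, uIcc p.1 p.2 ×ˢ uIcc p.1 p.2 := by
  apply sepConvexHull_min'
  · intro p hp
    exact mem_biUnion hp ⟨left_mem_uIcc, right_mem_uIcc⟩
  · rintro p hp q hq t ht hpq
    simp only [mem_iUnion, exists_prop] at hp hq ⊢
    obtain ⟨a, haK, hp1, hp2⟩ := hp
    obtain ⟨b, hbK, hq1, hq2⟩ := hq
    have hr : t • p + (1 - t) • q = (t * p.1 + (1 - t) * q.1, t * p.2 + (1 - t) * q.2) := by
      simp [Prod.ext_iff, smul_eq_mul]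
    rcases hpq with h | h
    · -- first coordinates equal
      have hr1 : t * p.1 + (1 - t) * q.1 = p.1 := by rw [h]; ring
      have hmem := comb_mem_union rfl rfl hp2 hq2 hp1 (h ▸ hq1) ht
      rcases hmem with hm | hm
      · exact ⟨a, haK, by rw [hr]; exact ⟨by rw [hr1]; exact hp1, hm⟩⟩
      · exact ⟨b, hbK, by rw [hr]; exact ⟨by rw [hr1, h]; exact hq1, hm⟩⟩
    · have hr2 : t * p.2 + (1 - t) * q.2 = p.2 := by rw [h]; ring
      have hmem := comb_mem_union rfl rfl hp1 hq1 hp2 (h ▸ hq2) ht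
      rcases hmem with hm | hm
      · exact ⟨a, haK, by rw [hr]; exact ⟨hm, by rw [hr2]; exact hp2⟩⟩
      · exact ⟨b, hbK, by rw [hr]; exact ⟨hm, by rw [hr2, h]; exact hq2⟩⟩

theorem iInter_sepConvexHull_nested (K : ℕ → Set (ℝ × ℝ))
    (hne : ∀ j, (K j).Nonempty) (hcpt : ∀ j, IsCompact (K j))
    (hsym : ∀ j, ∀ p ∈ K j, (p.2, p.1) ∈ K j)
    (hdiag : ∀ j, ∀ p ∈ K j, (p.1, p.1) ∈ K j ∧ (p.2, p.2) ∈ K j)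
    (hnest : ∀ j, K (j + 1) ⊆ K j) :
    ⋂ j, sepConvexHull (K j) = sepConvexHull (⋂ j, K j) := by
  apply Subset.antisymm
  · intro x hx
    simp only [mem_iInter] at hx
    set S : Set (ℝ × ℝ) := {p : ℝ × ℝ | x.1 ∈ uIcc p.1 p.2 ∧ x.2 ∈ uIcc p.1 p.2} with hS
    have hSclosed : IsClosed S := by
      have : S = {p : ℝ × ℝ | p.1 ⊓ p.2 ≤ x.1} ∩ {p : ℝ × ℝ | x.1 ≤ p.1 ⊔ p.2} ∩
          ({p : ℝ × ℝ | p.1 ⊓ p.2 ≤ x.2} ∩ {p : ℝ × ℝ | x.2 ≤ p.1 ⊔ p.2}) := by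
        ext p
        simp [hS, uIcc, mem_Icc, and_assoc]
      rw [this]
      exact (((isClosed_le (continuous_fst.min continuous_snd) continuous_const).inter
        (isClosed_le continuous_const (continuous_fst.max continuous_snd))).inter
        ((isClosed_le (continuous_fst.min continuous_snd) continuous_const).inter
        (isClosed_le continuous_const (continuous_fst.max continuous_snd))))
    set C : ℕ → Set (ℝ × ℝ) := fun j => K j ∩ S with hC
    have hCne : ∀ j, (C j).Nonempty := by
      intro j
      have h := hull_subset_union (hsym j) (hdiag j) (hx j)
      simp only [mem_iUnion, exists_prop] at h
      obtain ⟨p, hpK, h1, h2⟩ := h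
      exact ⟨p, hpK, h1, h2⟩
    have hCnest : ∀ j, C (j + 1) ⊆ C j := fun j p hp => ⟨hnest j hp.1, hp.2⟩
    have hCclosed : ∀ j, IsClosed (C j) := fun j => (hcpt j).isClosed.inter hSclosed
    have hC0 : IsCompact (C 0) := (hcpt 0).inter_right hSclosed
    obtain ⟨p, hp⟩ := IsCompact.nonempty_iInter_of_sequence_nonempty_isCompact_isClosed
      C hCnest hCne hC0 hCclosed
    simp only [mem_iInter] at hp
    have hpK : ∀ j, p ∈ K j := fun j => (hp j).1
    have hpmem : (p.1, p.2) ∈ ⋂ j, K j := mem_iInter.2 fun j => by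
      simpa using hpK j
    have hsymI : (p.2, p.1) ∈ ⋂ j, K j := mem_iInter.2 fun j => hsym j p (hpK j)
    have hd1 : (p.1, p.1) ∈ ⋂ j, K j := mem_iInter.2 fun j => (hdiag j p (hpK j)).1
    have hd2 : (p.2, p.2) ∈ ⋂ j, K j := mem_iInter.2 fun j => (hdiag j p (hpK j)).2
    have := square_subset_hull hpmem hsymI hd1 hd2 (show (x.1, x.2) ∈ _ from ⟨(hp 0).2.1, (hp 0).2.2⟩)
    simpa using this
  · intro x hx
    rw [mem_iInter]
    exact fun j => sepConvexHull_mono' (iInter_subset K j) hx
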